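/- arXiv:2108.02184 — 4 statements merged into one kernel-verified Lean document; each statement's English description precedes it below -/
import Mathlib

section
/- For every integer a ≥ 2 there exists a path v_1, ..., v_n in the a-dimensional hypercube {0,1}^a with length n = 2^a − 2a + 3 such that: v_1 = e_1 = 10^{a-1}, v_n = e_a = 0^{a-1}1, no vertex is visited more than once (the v_i are pairwise distinct), consecutive vertices differ in exactly one coordinate, and every interior vertex v_2, ..., v_{n-1} has weight at least 2. -/
/-- The weight of a hypercube vertex: its number of 1-coordinates. -/
def weight {a : ℕ} (v : Fin a → Bool) : ℕ :=
  (Finset.univ.filter (fun j => v j = true)).card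

/-- Two hypercube vertices are adjacent if they differ in exactly one coordinate. -/
def hammingAdj {a : ℕ} (u v : Fin a → Bool) : Prop :=
  (Finset.univ.filter (fun j => u j ≠ v j)).card = 1

namespace Flag
variable {a : ℕ}

def eV (a i : ℕ) : Fin a → Bool := fun j => decide (j.val = i)
def e2V (a i k : ℕ) : Fin a → Bool := fun j => decide (j.val = i ∨ j.val = k)
def zV (a : ℕ) : Fin a → Bool := fun _ => false

lemma hammingAdj_snoc (b : Bool) (u v : Fin a → Bool) :
    hammingAdj (Fin.snoc u b) (Fin.snoc v b : Fin (a+1) → Bool) ↔ hammingAdj u v := by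
  unfold hammingAdj
  rw [Finset.card_filter, Finset.card_filter, Fin.sum_univ_castSucc]
  simp [Fin.snoc_castSucc, Fin.snoc_last]

lemma hammingAdj_snoc_bool (v : Fin a → Bool) :
    hammingAdj (Fin.snoc v false) (Fin.snoc v true : Fin (a+1) → Bool) := by
  unfold hammingAdj
  rw [Finset.card_filter, Fin.sum_univ_castSucc]
  simp [Fin.snoc_castSucc, Fin.snoc_last]

def snocF (b : Bool) (v : Fin a → Bool) : Fin (a+1) → Bool := Fin.snoc v b

lemma snocF_injective (b : Bool) : Function.Injective (snocF (a := a) b) := by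
  intro u v h
  funext j
  have := congrFun h (Fin.castSucc j)
  simpa [snocF, Fin.snoc_castSucc] using this

lemma snocF_ne (b b' : Bool) (hb : b ≠ b') (u v : Fin a → Bool) :
    snocF b u ≠ snocF b' v := by
  intro h
  have := congrFun h (Fin.last a)
  simp [snocF, Fin.snoc_last] at this
  exact hb this

/-- reflected binary Gray code, as a list of hypercube vertices -/
def gray : (a : ℕ) → List (Fin a → Bool)
  | 0 => [zV 0]
  | a+1 => (gray a).map (snocF false) ++ ((gray a).reverse).map (snocF true)

lemma gray_length (a : ℕ) : (gray a).length = 2 ^ a := by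
  induction a with
  | zero => rfl
  | succ a ih => simp [gray, ih]; ring

lemma gray_ne_nil (a : ℕ) : gray a ≠ [] := by
  have h := gray_length a
  intro hn; rw [hn] at h; simp at h
  exact Nat.pos_iff_ne_zero.mp (pow_pos (by norm_num) a) h.symm

lemma gray_nodup (a : ℕ) : (gray a).Nodup := by
  induction a with
  | zero => simp [gray]
  | succ a ih =>
      rw [gray, List.nodup_append']
      refine ⟨ih.map (snocF_injective false), ((List.nodup_reverse.mpr ih).map (snocF_injective true)), ?_⟩
      intro x hx hy
      simp only [List.mem_map] at hx hy
      obtain ⟨u, _, rfl⟩ := hx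
      obtain ⟨v, _, hv⟩ := hy
      exact snocF_ne false true (by simp) u v hv.symm

lemma chain'_map_snocF (b : Bool) {l : List (Fin a → Bool)} (h : List.IsChain hammingAdj l) :
    List.IsChain hammingAdj (l.map (snocF b)) := by
  rw [List.isChain_map]
  exact h.imp (fun u v huv => (hammingAdj_snoc b u v).mpr huv)

lemma hammingAdj_symm {u v : Fin a → Bool} (h : hammingAdj u v) : hammingAdj v u := by
  unfold hammingAdj at *
  rw [← h]
  congr 1
  apply Finset.filter_congr
  intro j _
  simp [ne_comm]

lemma gray_chain (a : ℕ) : List.IsChain hammingAdj (gray a) := by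
  induction a with
  | zero => simp [gray]
  | succ a ih =>
      rw [gray]
      apply List.IsChain.append (chain'_map_snocF false ih)
        (chain'_map_snocF true ((List.isChain_reverse.mpr (ih.imp fun _ _ h => hammingAdj_symm h))))
      intro x hx y hy
      rw [List.getLast?_map] at hx
      rw [List.head?_map, List.head?_reverse] at hy
      obtain ⟨g, hg⟩ := Option.isSome_iff_exists.mp (List.getLast?_isSome.mpr (gray_ne_nil a))
      rw [hg] at hx hy
      simp at hx hy
      rw [← hx, ← hy]
      exact hammingAdj_snoc_bool g

lemma snoc_zV_false : (Fin.snoc (zV a) false : Fin (a+1) → Bool) = zV (a+1) := by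
  funext j
  induction j using Fin.lastCases with
  | last => simp [Fin.snoc_last, zV]
  | cast i => simp [Fin.snoc_castSucc, zV]

lemma snoc_zV_true : (Fin.snoc (zV a) true : Fin (a+1) → Bool) = eV (a+1) a := by
  funext j
  induction j using Fin.lastCases with
  | last => simp [Fin.snoc_last, eV]
  | cast i => simp [Fin.snoc_castSucc, zV, eV]; omega
    
lemma snoc_eV_false (i : ℕ) (hi : i < a) :
    (Fin.snoc (eV a i) false : Fin (a+1) → Bool) = eV (a+1) i := by
  funext j
  induction j using Fin.lastCases with
  | last => simp [Fin.snoc_last, eV]; omega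
  | cast k => simp [Fin.snoc_castSucc, eV]

lemma snoc_eV_true (i : ℕ) (hi : i < a) :
    (Fin.snoc (eV a i) true : Fin (a+1) → Bool) = e2V (a+1) i a := by
  funext j
  induction j using Fin.lastCases with
  | last => simp [Fin.snoc_last, e2V]
  | cast k =>
      simp [Fin.snoc_castSucc, eV, e2V]
      intro h; omega

lemma snoc_e2V_false (i k : ℕ) (hi : i < a) (hk : k < a) :
    (Fin.snoc (e2V a i k) false : Fin (a+1) → Bool) = e2V (a+1) i k := by
  funext j
  induction j using Fin.lastCases with
  | last => simp [Fin.snoc_last, e2V]; omega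
  | cast m => simp [Fin.snoc_castSucc, e2V]

lemma hammingAdj_comp (e : Fin b ≃ Fin b) (u v : Fin b → Bool) :
    hammingAdj (u ∘ e) (v ∘ e) ↔ hammingAdj u v := by
  unfold hammingAdj
  rw [Finset.card_filter, Finset.card_filter,
    ← Equiv.sum_comp e (fun j => if u j ≠ v j then 1 else 0)]
  rfl

lemma comp_injective (e : Fin b ≃ Fin b) :
    Function.Injective (fun v : Fin b → Bool => v ∘ e) := by
  intro u v h
  funext j
  have := congrFun h (e.symm j)
  simpa using this

lemma comp_swap_eV (hb : 2 ≤ b) :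
    (eV b 0) ∘ (Equiv.swap (⟨0, by omega⟩ : Fin b) ⟨b-1, by omega⟩) = eV b (b-1) := by
  have hne : (⟨0, by omega⟩ : Fin b) ≠ ⟨b-1, by omega⟩ := by
    simp [Fin.ext_iff]; omega
  funext j
  simp only [Function.comp_apply, eV]
  by_cases h0 : j = (⟨0, by omega⟩ : Fin b)
  · subst h0; rw [Equiv.swap_apply_left]; simp; omega
  · by_cases h1 : j = (⟨b-1, by omega⟩ : Fin b)
    · subst h1; rw [Equiv.swap_apply_right]; simp
    · rw [Equiv.swap_apply_of_ne_of_ne h0 h1]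
      rw [Fin.ext_iff] at h0 h1
      simp at h0 h1 ⊢
      omega

lemma comp_swap_e2V (hb : 2 ≤ b) :
    (e2V b 0 (b-1)) ∘ (Equiv.swap (⟨0, by omega⟩ : Fin b) ⟨b-1, by omega⟩) = e2V b 0 (b-1) := by
  funext j
  simp only [Function.comp_apply, e2V]
  by_cases h0 : j = (⟨0, by omega⟩ : Fin b)
  · subst h0; rw [Equiv.swap_apply_left]; simp
  · by_cases h1 : j = (⟨b-1, by omega⟩ : Fin b)
    · subst h1; rw [Equiv.swap_apply_right]; simp
    · rw [Equiv.swap_apply_of_ne_of_ne h0 h1]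

lemma comp_swap_zV (hb : 2 ≤ b) :
    (zV b) ∘ (Equiv.swap (⟨0, by omega⟩ : Fin b) ⟨b-1, by omega⟩) = zV b := rfl


lemma weight_snoc (b : Bool) (v : Fin a → Bool) :
    weight (Fin.snoc v b : Fin (a+1) → Bool) = weight v + (if b then 1 else 0) := by
  unfold weight
  rw [Finset.card_filter, Finset.card_filter, Fin.sum_univ_castSucc]
  simp [Fin.snoc_castSucc, Fin.snoc_last]

lemma weight_snocF (bb : Bool) (v : Fin a → Bool) :
    weight (snocF bb v) = weight v + (if bb then 1 else 0) := weight_snoc bb v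

lemma weight_pos_of_ne_zV {v : Fin a → Bool} (h : v ≠ zV a) : 1 ≤ weight v := by
  rw [Nat.one_le_iff_ne_zero]
  intro hw
  apply h
  funext j
  unfold weight at hw
  rw [Finset.card_eq_zero] at hw
  have : j ∉ Finset.univ.filter (fun j => v j = true) := by rw [hw]; simp
  simp at this
  simp [zV, this]

lemma weight_e2V (i k : ℕ) (hik : i ≠ k) (hi : i < a) (hk : k < a) :
    weight (e2V a i k) = 2 := by
  unfold weight e2V
  rw [show Finset.univ.filter (fun j : Fin a => decide (j.val = i ∨ j.val = k) = true)
      = {⟨i, hi⟩, ⟨k, hk⟩} from by ext j; simp [Fin.ext_iff]]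
  rw [Finset.card_insert_of_notMem (by simp [Fin.ext_iff, hik]), Finset.card_singleton]

/-- structural form of the Gray code for `a ≥ 2` -/
lemma gray_struct : ∀ a : ℕ, 2 ≤ a →
    ∃ m : List (Fin a → Bool),
      gray a = zV a :: eV a 0 :: (m ++ [e2V a 0 (a-1), eV a (a-1)]) := by
  intro a ha
  induction a with
  | zero => omega
  | succ a ih =>
    rcases Nat.lt_or_ge a 2 with h2 | h2
    · -- a + 1 = 2
      have ha2 : a = 1 := by omega
      subst ha2
      refine ⟨[], ?_⟩
      show gray 2 = _
      have g1 : gray 1 = [zV 1, eV 1 0] := by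
        show [snocF false (zV 0), snocF true (zV 0)] = _
        rw [show (snocF false (zV 0) : Fin 1 → Bool) = zV 1 from snoc_zV_false,
          show (snocF true (zV 0) : Fin 1 → Bool) = eV 1 0 from snoc_zV_true]
      show (gray 1).map (snocF false) ++ ((gray 1).reverse).map (snocF true) = _
      rw [g1]
      simp only [List.map, List.reverse_cons, List.reverse_nil, List.nil_append,
        List.cons_append, List.map_cons, List.map_nil]
      rw [show (snocF false (zV 1) : Fin 2 → Bool) = zV 2 from snoc_zV_false,
        show (snocF false (eV 1 0) : Fin 2 → Bool) = eV 2 0 from snoc_eV_false 0 (by omega),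
        show (snocF true (eV 1 0) : Fin 2 → Bool) = e2V 2 0 1 from snoc_eV_true 0 (by omega),
        show (snocF true (zV 1) : Fin 2 → Bool) = eV 2 1 from snoc_zV_true]
    · obtain ⟨m, hm⟩ := ih h2
      refine ⟨(m.map (snocF false)) ++ [snocF false (e2V a 0 (a-1)), snocF false (eV a (a-1)),
        snocF true (eV a (a-1)), snocF true (e2V a 0 (a-1))] ++ (m.reverse.map (snocF true)), ?_⟩
      show (gray a).map (snocF false) ++ ((gray a).reverse).map (snocF true) = _
      rw [hm]
      simp only [List.reverse_cons, List.reverse_append, List.map_append, List.map_cons,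
        List.map_nil, List.reverse_nil, List.nil_append, List.cons_append, List.append_assoc,
        List.singleton_append, List.map_reverse]
      rw [show (snocF false (zV a) : Fin (a+1) → Bool) = zV (a+1) from snoc_zV_false,
        show (snocF false (eV a 0) : Fin (a+1) → Bool) = eV (a+1) 0 from snoc_eV_false 0 (by omega),
        show (snocF true (eV a 0) : Fin (a+1) → Bool) = e2V (a+1) 0 a from snoc_eV_true 0 (by omega),
        show (snocF true (zV a) : Fin (a+1) → Bool) = eV (a+1) a from snoc_zV_true]
      simp [Nat.add_sub_cancel]

lemma getLast?_cons_append {α : Type*} (x y : α) (l : List α) :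
    (x :: (l ++ [y])).getLast? = some y := by
  rw [← List.cons_append, List.getLast?_concat]

/-- the decreasing path: from `1_{{a-2,a-1}}` to `0`, length `2^a - 1`,
second-to-last vertex `e_{a-1}` -/
lemma S_exists : ∀ a : ℕ, 2 ≤ a →
    ∃ s m : List (Fin a → Bool),
      s = e2V a (a-2) (a-1) :: (m ++ [eV a (a-1), zV a]) ∧
      s.length = 2 ^ a - 1 ∧ s.Nodup ∧ List.IsChain hammingAdj s := by
  intro a ha
  rcases Nat.lt_or_ge a 3 with h3 | h3
  · -- base case a = 2
    have ha2 : a = 2 := by omega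
    subst ha2
    refine ⟨[e2V 2 0 1, eV 2 1, zV 2], [], rfl, rfl, ?_, ?_⟩
    · unfold e2V eV zV; decide
    · refine List.isChain_cons_cons.mpr ⟨?_, List.isChain_cons_cons.mpr ⟨?_, List.isChain_singleton _⟩⟩
      · unfold hammingAdj e2V eV; decide
      · unfold hammingAdj eV zV; decide
  · -- a = b + 1 with b ≥ 2
    obtain ⟨b, rfl⟩ : ∃ b, a = b + 1 := ⟨a - 1, by omega⟩
    have hb : 2 ≤ b := by omega
    obtain ⟨mid, hm⟩ := gray_struct b hb
    set z := zV b
    set e0 := eV b 0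
    set x2 := e2V b 0 (b-1)
    set e1 := eV b (b-1)
    have gnd : (z :: e0 :: (mid ++ [x2, e1])).Nodup := hm ▸ gray_nodup b
    have gch : List.IsChain hammingAdj (z :: e0 :: (mid ++ [x2, e1])) := hm ▸ gray_chain b
    have glen : mid.length + 4 = 2 ^ b := by
      have hg := gray_length b
      rw [hm] at hg
      simp at hg
      omega
    set sw : Fin b ≃ Fin b := Equiv.swap (⟨0, by omega⟩ : Fin b) ⟨b-1, by omega⟩ with hsw
    set σ : (Fin b → Bool) → (Fin b → Bool) := fun v => v ∘ sw with hσ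
    set E_raw : List (Fin b → Bool) := e0 :: (mid ++ [x2]) with hEraw
    set T_raw : List (Fin b → Bool) := x2 :: (mid.reverse ++ [e0, z]) with hTraw
    set E : List (Fin b → Bool) := E_raw.map σ with hE
    refine ⟨snocF true e1 ::
        ((E.map (snocF false) ++ T_raw.map (snocF true)) ++ [zV (b+1)]),
      E.map (snocF false) ++ (x2 :: (mid.reverse ++ [e0])).map (snocF true),
      ?_, ?_, ?_, ?_⟩
    · -- structural equation
      rw [show snocF true e1 = e2V (b+1) ((b+1)-2) ((b+1)-1) from ?_]
      · simp only [hTraw, List.map_cons, List.map_append]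
        rw [show snocF true z = eV (b+1) ((b+1)-1) from ?_]
        · simp
        · show (Fin.snoc (zV b) true : Fin (b+1) → Bool) = _
          rw [snoc_zV_true, Nat.add_sub_cancel]
      · show (Fin.snoc (eV b (b-1)) true : Fin (b+1) → Bool) = _
        rw [snoc_eV_true (b-1) (by omega)]
        congr 1 <;> omega
    · -- length
      have h2 : 2 ^ (b+1) = 2 * 2 ^ b := by ring
      simp [hE, hEraw, hTraw]
      omega
    · -- nodup
      simp only [List.nodup_cons, List.nodup_append', List.mem_cons, List.mem_append,
        List.nodup_reverse, List.mem_reverse, List.nodup_singleton, List.mem_singleton,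
        List.not_mem_nil, or_false, List.disjoint_singleton] at gnd ⊢
      obtain ⟨h1, h2, hmidnd, ⟨hx2e1, -, -⟩, hdisj⟩ := gnd
      push_neg at h1 h2
      obtain ⟨hze0, hzmid, hzx2, hze1⟩ := h1
      obtain ⟨he0mid, he0x2, he0e1⟩ := h2
      have hx2mid : x2 ∉ mid := fun h => hdisj h (by simp)
      have he1mid : e1 ∉ mid := fun h => hdisj h (by simp)
      have hσinj : Function.Injective σ := comp_injective sw
      have hσz : σ z = z := rfl
      have hEraw_nd : E_raw.Nodup := by
        rw [hEraw]
        refine List.nodup_cons.mpr ⟨?_, List.nodup_append'.mpr ⟨hmidnd, List.nodup_singleton _, ?_⟩⟩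
        · simp only [List.mem_append, List.mem_singleton]
          rintro (h | h)
          · exact he0mid h
          · exact he0x2 h
        · intro w hw hw'
          simp only [List.mem_singleton] at hw'
          subst hw'
          exact hx2mid hw
      have hT_nd : T_raw.Nodup := by
        rw [hTraw]
        refine List.nodup_cons.mpr ⟨?_,
          List.nodup_append'.mpr ⟨List.nodup_reverse.mpr hmidnd, ?_, ?_⟩⟩
        · simp only [List.mem_append, List.mem_reverse, List.mem_cons, List.not_mem_nil,
            or_false]
          rintro (h | h | h)
          · exact hx2mid h
          · exact he0x2 h.symm
          · exact hzx2 h.symm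
        · refine List.nodup_cons.mpr ⟨?_, List.nodup_singleton _⟩
          simp only [List.mem_singleton]
          exact fun h => hze0 h.symm
        · intro w hw hw'
          rw [List.mem_reverse] at hw
          simp only [List.mem_cons, List.not_mem_nil, or_false] at hw'
          rcases hw' with rfl | rfl
          · exact he0mid hw
          · exact hzmid hw
      refine ⟨?_, ⟨?_, ?_, ?_⟩, ⟨not_false, List.nodup_nil⟩, ?_⟩
      · rintro ((h | h) | h)
        · obtain ⟨w, -, hw⟩ := List.mem_map.mp h
          exact snocF_ne false true (by simp) w e1 hw
        · obtain ⟨w, hwmem, hw⟩ := List.mem_map.mp h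
          have hwe : w = e1 := snocF_injective true hw
          subst hwe
          rw [hTraw] at hwmem
          simp only [List.mem_cons, List.mem_append, List.mem_reverse, List.not_mem_nil,
            or_false] at hwmem
          rcases hwmem with h' | h' | h' | h'
          · exact hx2e1 h'.symm
          · exact he1mid h'
          · exact he0e1 h'.symm
          · exact hze1 h'.symm
        · rw [show zV (b+1) = Flag.snocF false (zV b) from snoc_zV_false.symm] at h
          exact snocF_ne true false (by simp) e1 z h
      · exact (hEraw_nd.map hσinj).map (snocF_injective false)
      · exact hT_nd.map (snocF_injective true)
      · intro w hwA hwB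
        obtain ⟨u, -, rfl⟩ := List.mem_map.mp hwA
        obtain ⟨u', -, hu'⟩ := List.mem_map.mp hwB
        exact snocF_ne false true (by simp) u u' hu'.symm
      · rintro (h | h)
        · rw [show zV (b+1) = Flag.snocF false (zV b) from snoc_zV_false.symm] at h
          obtain ⟨u, humem, hu⟩ := List.mem_map.mp h
          have huz : u = z := snocF_injective false hu
          subst huz
          obtain ⟨w, hwmem, hw⟩ := List.mem_map.mp humem
          have hwz : w = z := hσinj (hw.trans hσz.symm)
          subst hwz
          rw [hEraw] at hwmem
          simp only [List.mem_cons, List.mem_append, List.mem_singleton,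
            List.not_mem_nil, or_false] at hwmem
          rcases hwmem with h' | h' | h'
          · exact hze0 h'
          · exact hzmid h'
          · exact hzx2 h'
        · rw [show zV (b+1) = Flag.snocF false (zV b) from snoc_zV_false.symm] at h
          obtain ⟨u, -, hu⟩ := List.mem_map.mp h
          exact snocF_ne true false (by simp) u z hu
    · -- chain
      have hσe0 : σ e0 = e1 := comp_swap_eV hb
      have hσx2 : σ x2 = x2 := comp_swap_e2V hb
      have hEraw_ch : List.IsChain hammingAdj E_raw := by
        have h := gch.tail
        rw [show (z :: e0 :: (mid ++ [x2, e1])).tail = E_raw ++ [e1] from by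
          rw [hEraw]; simp] at h
        exact (List.isChain_append.mp h).1
      have hE_ch : List.IsChain hammingAdj E := by
        rw [hE, List.isChain_map]
        exact hEraw_ch.imp fun u v huv => (hammingAdj_comp sw u v).mpr huv
      have hT_ch : List.IsChain hammingAdj T_raw := by
        have h := List.isChain_reverse.mpr (gch.imp fun _ _ hh => hammingAdj_symm hh)
        rw [show (z :: e0 :: (mid ++ [x2, e1])).reverse = e1 :: T_raw from by
          rw [hTraw]; simp] at h
        exact h.tail
      refine List.isChain_cons.mpr ⟨?_, ?_⟩
      · intro y hy
        rw [show ((E.map (snocF false) ++ T_raw.map (snocF true)) ++ [zV (b+1)]).head?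
            = some (snocF false e1) from ?_] at hy
        · simp only [Option.mem_def, Option.some.injEq] at hy
          subst hy
          exact hammingAdj_symm (hammingAdj_snoc_bool e1)
        · rw [hE, hEraw]
          simp [hσe0]
      · refine List.isChain_append.mpr ⟨List.isChain_append.mpr
          ⟨chain'_map_snocF false hE_ch, chain'_map_snocF true hT_ch, ?_⟩, ?_, ?_⟩
        · intro x hx y hy
          rw [hE, hEraw] at hx
          simp only [List.map_cons, List.map_append, List.map_nil] at hx
          rw [getLast?_cons_append] at hx
          rw [hTraw, List.map_cons, List.head?_cons] at hy
          simp only [Option.mem_def, Option.some.injEq] at hx hy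
          subst hx; subst hy
          rw [show σ x2 = x2 from hσx2]
          exact hammingAdj_snoc_bool x2
        · exact List.isChain_singleton _
        · intro x hx y hy
          rw [List.getLast?_append] at hx
          rw [show (T_raw.map (snocF true)).getLast? = some (snocF true z) from ?_] at hx
          · simp only [Option.some_or, Option.mem_def, Option.some.injEq] at hx
            simp only [List.head?_cons, Option.mem_def, Option.some.injEq] at hy
            subst hx; subst hy
            rw [show zV (b+1) = Flag.snocF false (zV b) from snoc_zV_false.symm]
            exact hammingAdj_symm (hammingAdj_snoc_bool z)
          · rw [hTraw]
            simp only [List.map_cons, List.map_append, List.map_nil]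
            rw [show Flag.snocF true x2 :: (List.map (snocF true) mid.reverse
                ++ [snocF true e0, snocF true z])
                = Flag.snocF true x2 :: ((List.map (snocF true) mid.reverse
                ++ [snocF true e0]) ++ [snocF true z]) from by simp]
            rw [getLast?_cons_append]

lemma two_mul_le_pow : ∀ a : ℕ, 2 ≤ a → 2 * a ≤ 2 ^ a := by
  intro a ha
  induction a with
  | zero => omega
  | succ n ih =>
    rcases Nat.lt_or_ge n 2 with h | h
    · have : n = 1 := by omega
      subst this
      norm_num
    · have h1 := ih h
      have h2 : (2:ℕ) ≤ 2 ^ n := by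
        calc (2:ℕ) = 2^1 := rfl
        _ ≤ 2^n := Nat.pow_le_pow_right (by norm_num) (by omega)
      have h3 : 2 ^ (n+1) = 2 * 2 ^ n := by ring
      omega

/-- the main path: `e_0` to `e_{a-1}`, length `2^a - 2a + 3`, interior weight ≥ 2,
second-to-last vertex `1_{{a-2,a-1}}` -/
lemma P_exists : ∀ a : ℕ, 2 ≤ a →
    ∃ p m : List (Fin a → Bool),
      p = eV a 0 :: (m ++ [e2V a (a-2) (a-1), eV a (a-1)]) ∧
      p.length = 2 ^ a - 2 * a + 3 ∧ p.Nodup ∧ List.IsChain hammingAdj p ∧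
      ∀ v ∈ m, 2 ≤ weight v := by
  intro a ha
  induction a with
  | zero => omega
  | succ a ih =>
    rcases Nat.lt_or_ge a 2 with h2 | h2
    · -- base case a + 1 = 2
      have ha1 : a = 1 := by omega
      subst ha1
      refine ⟨[eV 2 0, e2V 2 0 1, eV 2 1], [], rfl, rfl, ?_, ?_, by simp⟩
      · unfold eV e2V; decide
      · refine List.isChain_cons_cons.mpr ⟨?_, List.isChain_cons_cons.mpr ⟨?_, List.isChain_singleton _⟩⟩
        · unfold hammingAdj eV e2V; decide
        · unfold hammingAdj e2V eV; decide
    · obtain ⟨p, m, hp, hplen, hpnd, hpch, hpw⟩ := ih h2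
      obtain ⟨sL, ms, hs, hslen, hsnd, hsch⟩ := S_exists a h2
      set e0a := eV a 0
      set x2a := e2V a (a-2) (a-1)
      set e1a := eV a (a-1)
      set pL := (e0a :: (m ++ [x2a])).map (snocF false) ++ sL.map (snocF true) with hpL
      set m' := ((m ++ [x2a]).map (snocF false)) ++ (snocF true x2a :: ms.map (snocF true))
        with hm'
      have c1 : pL = eV (a+1) 0 :: (m' ++ [e2V (a+1) ((a+1)-2) ((a+1)-1), eV (a+1) ((a+1)-1)]) := by
        rw [hpL, hm', hs]
        simp only [List.map_cons, List.map_append, List.map_nil]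
        rw [show snocF false e0a = eV (a+1) 0 from snoc_eV_false 0 (by omega),
          show snocF true e1a = e2V (a+1) ((a+1)-2) ((a+1)-1) from ?_,
          show snocF true (zV a) = eV (a+1) ((a+1)-1) from ?_]
        · simp
        · show (Fin.snoc (zV a) true : Fin (a+1) → Bool) = _
          rw [snoc_zV_true, Nat.add_sub_cancel]
        · show (Fin.snoc (eV a (a-1)) true : Fin (a+1) → Bool) = _
          rw [snoc_eV_true (a-1) (by omega)]
          congr 1 <;> omega
      have c2 : pL.length = 2 ^ (a+1) - 2 * (a+1) + 3 := by
        have hl : p.length = m.length + 3 := by rw [hp]; simp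
        have h3 : 2 ^ (a+1) = 2 * 2 ^ a := by ring
        have h4 := two_mul_le_pow a h2
        rw [hpL]
        simp only [List.length_append, List.length_map, List.length_cons, List.length_append,
          List.length_singleton, List.length_nil]
        clear_value pL m' e0a x2a e1a
        clear ih hpw hpnd hpch hsnd hsch hp hs c1 hpL hm' pL m' e0a x2a e1a ha
        omega
      have c3 : pL.Nodup := by
        have hleft : (e0a :: (m ++ [x2a])).Nodup := by
          have hre : p = (e0a :: (m ++ [x2a])) ++ [e1a] := by rw [hp]; simp
          rw [hre] at hpnd
          exact (List.nodup_append'.mp hpnd).1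
        rw [hpL]
        refine List.nodup_append'.mpr ⟨hleft.map (snocF_injective false),
          hsnd.map (snocF_injective true), ?_⟩
        intro w hwA hwB
        obtain ⟨u, -, rfl⟩ := List.mem_map.mp hwA
        obtain ⟨u', -, hu'⟩ := List.mem_map.mp hwB
        exact snocF_ne false true (by simp) u u' hu'.symm
      have c4 : List.IsChain hammingAdj pL := by
        have hleftch : List.IsChain hammingAdj (e0a :: (m ++ [x2a])) := by
          have hre : p = (e0a :: (m ++ [x2a])) ++ [e1a] := by rw [hp]; simp
          rw [hre] at hpch
          exact (List.isChain_append.mp hpch).1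
        rw [hpL]
        refine List.isChain_append.mpr ⟨chain'_map_snocF false hleftch,
          chain'_map_snocF true hsch, ?_⟩
        intro x hx y hy
        simp only [List.map_cons, List.map_append, List.map_nil] at hx
        rw [getLast?_cons_append] at hx
        rw [hs, List.map_cons, List.head?_cons] at hy
        simp only [Option.mem_def, Option.some.injEq] at hx hy
        subst hx; subst hy
        exact hammingAdj_snoc_bool x2a
      have c5 : ∀ v ∈ m', 2 ≤ weight v := by
        intro v hv
        rw [hm'] at hv
        simp only [List.mem_append, List.mem_cons, List.mem_map] at hv
        rcases hv with (⟨u, hu, rfl⟩ | hv)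
        · rw [weight_snocF]
          rcases hu with hu | rfl | h0
          · have := hpw u hu
            simpa using this
          · rw [weight_e2V (a-2) (a-1) (by omega) (by omega) (by omega)]
            simp
          · exact absurd h0 (by simp)
        · have hzne : ∀ u ∈ x2a :: ms, u ≠ zV a := by
            intro u hu huz
            subst huz
            rw [hs] at hsnd
            rcases List.mem_cons.mp hu with h' | h'
            · exact (List.nodup_cons.mp hsnd).1 (by rw [h']; simp)
            · have hnd2 := (List.nodup_cons.mp hsnd).2
              have := (List.nodup_append'.mp hnd2).2.2
              exact this h' (by simp)
          rcases hv with rfl | ⟨u, hu, rfl⟩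
          · rw [weight_snocF]
            have h1 := weight_pos_of_ne_zV (hzne x2a (by simp))
            simp only [if_pos]
            omega
          · rw [weight_snocF]
            have h1 := weight_pos_of_ne_zV (hzne u (by simp [hu]))
            simp only [if_pos]
            omega
      exact ⟨pL, m', c1, c2, c3, c4, c5⟩

end Flag

/-- **Lemma 2, flag sequences.**  For every `a ≥ 2` there is a path
`v 0, v 1, …, v (n-1)` of length `n = 2^a - 2a + 3` in the `a`-dimensional hypercube with
pairwise distinct vertices, starting at `e_1 = 10^(a-1)`, ending at `e_a = 0^(a-1)1`,
consecutive vertices differing in exactly one coordinate, and all interior vertices of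
weight at least `2`. -/
theorem flag_sequence_exists (a : ℕ) (ha : 2 ≤ a) :
    ∃ (n : ℕ) (v : ℕ → (Fin a → Bool)),
      n = 2 ^ a - 2 * a + 3 ∧
      (∀ i j, i < n → j < n → v i = v j → i = j) ∧
      v 0 = (fun j => decide (j.val = 0)) ∧
      v (n - 1) = (fun j => decide (j.val = a - 1)) ∧
      (∀ i, i + 1 < n → hammingAdj (v i) (v (i + 1))) ∧
      (∀ i, 0 < i → i + 1 < n → 2 ≤ weight (v i)) := by
  obtain ⟨p, m, hp, hplen, hpnd, hpch, hpw⟩ := Flag.P_exists a ha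
  have hlen3 : p.length = m.length + 3 := by rw [hp]; simp
  have hre : p = (Flag.eV a 0 :: (m ++ [Flag.e2V a (a-2) (a-1)])) ++ [Flag.eV a (a-1)] := by
    rw [hp]; simp
  refine ⟨p.length, fun i => p.getD i (Flag.zV a), hplen, ?_, ?_, ?_, ?_, ?_⟩
  · -- injectivity
    intro i j hi hj hij
    simp only at hij
    rw [List.getD_eq_getElem _ _ hi, List.getD_eq_getElem _ _ hj] at hij
    exact (hpnd.getElem_inj_iff).mp hij
  · -- start
    show p.getD 0 (Flag.zV a) = _
    rw [hp, List.getD_cons_zero]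
    rfl
  · -- end
    show p.getD (p.length - 1) (Flag.zV a) = _
    have hlt : p.length - 1 < p.length := by omega
    rw [List.getD_eq_getElem _ _ hlt]
    have h2 : p.getLast? = some (Flag.eV a (a-1)) := by
      rw [hre]; exact List.getLast?_concat
    have h3 : p.getLast? = some (p[p.length - 1]'hlt) := by
      rw [List.getLast?_eq_getElem?, List.getElem?_eq_getElem hlt]
    rw [h2] at h3
    have h4 := Option.some.inj h3
    rw [← h4]
    rfl
  · -- adjacency
    intro i hi
    simp only
    rw [List.getD_eq_getElem _ _ (by omega : i < p.length), List.getD_eq_getElem _ _ hi]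
    have h5 := List.isChain_iff_getElem.mp hpch i (by omega)
    simpa [List.get_eq_getElem] using h5
  · -- interior weights
    intro i h0 hi1
    simp only
    rw [List.getD_eq_getElem _ _ (by omega : i < p.length)]
    obtain ⟨k, rfl⟩ : ∃ k, i = k + 1 := ⟨i - 1, by omega⟩
    have hk : k < (m ++ [Flag.e2V a (a-2) (a-1)]).length := by
      simp only [List.length_append, List.length_singleton]
      omega
    have h6 : p[k+1]'(by omega) = (m ++ [Flag.e2V a (a-2) (a-1)])[k]'hk := by
      rw [List.getElem_of_eq (hre.trans (by simp)
          : p = Flag.eV a 0 :: ((m ++ [Flag.e2V a (a-2) (a-1)]) ++ [Flag.eV a (a-1)]))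
        (by omega)]
      rw [List.getElem_cons_succ]
      exact List.getElem_append_left hk
    rw [h6]
    have hmem := List.getElem_mem hk
    rcases List.mem_append.mp hmem with h' | h'
    · exact hpw _ h'
    · rw [List.mem_singleton.mp h']
      rw [Flag.weight_e2V (a-2) (a-1) (by omega) (by omega) (by omega)]
end

section
/- For every integer a ≥ 2, the length 2^a − 2a + 3 in Lemma 2 is maximal: if v_1, ..., v_n is any sequence of pairwise distinct Boolean vectors in {0,1}^a with n ≥ 2, such that consecutive vectors differ in exactly one coordinate, the endpoints v_1 and v_n each have weight exactly 1, and all interior vertices v_2, ..., v_{n-1} have weight at least 2, then n ≤ 2^a − 2a + 3. -/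
lemma weight_sum {a : ℕ} (w : Fin a → Bool) :
    weight w = ∑ j, (if w j = true then 1 else 0) := by
  rw [weight, Finset.card_filter]

lemma parity_flip {a : ℕ} {u w : Fin a → Bool} (h : hammingAdj u w) :
    (weight u + weight w) % 2 = 1 := by
  classical
  have h' : (∑ j, (if u j ≠ w j then 1 else 0)) = 1 := by
    rw [hammingAdj, Finset.card_filter] at h
    convert h using 2
  rw [weight_sum, weight_sum, ← Finset.sum_add_distrib, Finset.sum_nat_mod]
  have hc : ∀ j ∈ Finset.univ, ((if u j = true then 1 else 0) + (if w j = true then 1 else 0)) % 2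
      = (if u j ≠ w j then 1 else 0) % 2 := by
    intro j _
    cases hu : u j <;> cases hw : w j <;> simp [hu, hw]
  rw [Finset.sum_congr rfl hc, ← Finset.sum_nat_mod, h']

lemma flip_adj {a : ℕ} (ha : 0 < a) (w : Fin a → Bool) :
    hammingAdj w (Function.update w ⟨0, ha⟩ (!w ⟨0, ha⟩)) := by
  classical
  rw [hammingAdj]
  have : (Finset.univ.filter (fun j => w j ≠ Function.update w ⟨0, ha⟩ (!w ⟨0, ha⟩) j))
      = {(⟨0, ha⟩ : Fin a)} := by
    ext j
    by_cases hj : j = ⟨0, ha⟩ <;> simp [hj, Function.update_apply]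
  rw [this, Finset.card_singleton]

lemma flip_flip' {a : ℕ} (ha : 0 < a) (w : Fin a → Bool) :
    Function.update (Function.update w ⟨0, ha⟩ (!w ⟨0, ha⟩)) ⟨0, ha⟩
      (!(Function.update w ⟨0, ha⟩ (!w ⟨0, ha⟩)) ⟨0, ha⟩) = w := by
  simp [Function.update_idem]

lemma card_odd {a : ℕ} (ha : 0 < a) :
    2 * (Finset.univ.filter (fun w : Fin a → Bool => weight w % 2 = 1)).card = 2 ^ a := by
  classical
  set O := Finset.univ.filter (fun w : Fin a → Bool => weight w % 2 = 1) with hO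
  set E := Finset.univ.filter (fun w : Fin a → Bool => ¬ weight w % 2 = 1) with hE
  have hcard : O.card = E.card := by
    refine Finset.card_bij' (fun w _ => Function.update w ⟨0, ha⟩ (!w ⟨0, ha⟩))
      (fun w _ => Function.update w ⟨0, ha⟩ (!w ⟨0, ha⟩)) ?_ ?_ ?_ ?_
    · intro w hw
      have h1 := parity_flip (flip_adj ha w)
      simp only [hO, hE, Finset.mem_filter, Finset.mem_univ, true_and] at hw ⊢
      omega
    · intro w hw
      have h1 := parity_flip (flip_adj ha w)
      simp only [hO, hE, Finset.mem_filter, Finset.mem_univ, true_and] at hw ⊢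
      omega
    · intro w _; exact flip_flip' ha w
    · intro w _; exact flip_flip' ha w
  have hsum : O.card + E.card = 2 ^ a := by
    rw [hO, hE, Finset.card_filter_add_card_filter_not, Finset.card_univ]
    simp
  omega

lemma card_weight_one {a : ℕ} :
    (Finset.univ.filter (fun w : Fin a → Bool => weight w = 1)).card = a := by
  classical
  have : (Finset.univ : Finset (Fin a)).card
      = (Finset.univ.filter (fun w : Fin a → Bool => weight w = 1)).card := by
    refine Finset.card_bij (fun j _ => fun k => decide (k = j)) ?_ ?_ ?_
    · intro j _
      simp only [Finset.mem_filter, Finset.mem_univ, true_and]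
      rw [weight]
      have : (Finset.univ.filter (fun k : Fin a => decide (k = j) = true)) = {j} := by
        ext k; simp
      rw [this, Finset.card_singleton]
    · intro j1 _ j2 _ h
      have := congrFun h j1
      simpa using this
    · intro w hw
      simp only [Finset.mem_filter, Finset.mem_univ, true_and] at hw
      rw [weight] at hw
      obtain ⟨j, hj⟩ := Finset.card_eq_one.mp hw
      refine ⟨j, Finset.mem_univ j, ?_⟩
      funext k
      have hk : w k = true ↔ k = j := by
        constructor
        · intro hk
          have hm : k ∈ Finset.univ.filter (fun k => w k = true) := by simp [hk]
          rw [hj] at hm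
          simpa using hm
        · rintro rfl
          have hm := Finset.mem_singleton_self k
          rw [← hj] at hm
          simpa using hm
      cases hwk : w k
      · simp only [Bool.false_eq, decide_eq_false_iff_not]
        intro h; rw [← hk] at h; rw [hwk] at h; exact Bool.false_ne_true h
      · simp [hk.mp hwk]
  rw [← this, Finset.card_univ, Fintype.card_fin]

/-- **maximality of Lemma 2.**  For `a ≥ 2`, any self-avoiding path
`v 0, …, v (n-1)` (with `n ≥ 2`) in the `a`-dimensional hypercube whose consecutive vertices
differ in exactly one coordinate, whose two endpoints have weight exactly `1`, and all of
whose interior vertices have weight at least `2`, has length `n ≤ 2^a - 2a + 3`. -/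
theorem flag_sequence_maximal (a : ℕ) (ha : 2 ≤ a) (n : ℕ) (hn : 2 ≤ n)
    (v : ℕ → (Fin a → Bool))
    (hinj : ∀ i j, i < n → j < n → v i = v j → i = j)
    (hadj : ∀ i, i + 1 < n → hammingAdj (v i) (v (i + 1)))
    (hstart : weight (v 0) = 1)
    (hend : weight (v (n - 1)) = 1)
    (hint : ∀ i, 0 < i → i + 1 < n → 2 ≤ weight (v i)) :
    n ≤ 2 ^ a - 2 * a + 3 := by
  classical
  have ha0 : 0 < a := by omega
  -- parity along the path
  have hpar : ∀ i, i < n → (weight (v i) + i) % 2 = 1 := by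
    intro i
    induction i with
    | zero => intro _; simp only [Nat.add_zero]; omega
    | succ k ih =>
      intro hk
      have h1 := ih (by omega)
      have h2 := parity_flip (hadj k (by omega))
      omega
  have hodd : n % 2 = 1 := by
    have := hpar (n - 1) (by omega)
    rw [hend] at this
    omega
  -- n = 2 * m + 3
  obtain ⟨m, rfl⟩ : ∃ m, n = 2 * m + 3 := ⟨(n - 3) / 2, by omega⟩
  set S := Finset.univ.filter
    (fun w : Fin a → Bool => weight w % 2 = 1 ∧ weight w ≠ 1) with hS
  have hmS : m ≤ S.card := by
    have := Finset.card_le_card_of_injOn (fun i => v (2 * i + 2))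
      (s := Finset.range m) (t := S) ?_ ?_
    · simpa using this
    · intro i hi
      rw [Finset.mem_coe, Finset.mem_range] at hi
      have h1 : 2 * i + 2 < 2 * m + 3 := by omega
      have h2 := hpar (2 * i + 2) h1
      have h3 := hint (2 * i + 2) (by omega) (by omega)
      simp only [hS, Finset.mem_coe, Finset.mem_filter, Finset.mem_univ, true_and]
      omega
    · intro i hi j hj hij
      rw [Finset.coe_range, Set.mem_Iio] at hi hj
      have := hinj (2 * i + 2) (2 * j + 2) (by omega) (by omega) hij
      omega
  -- S = odd weight minus weight one
  have hsub : (Finset.univ.filter (fun w : Fin a → Bool => weight w = 1)) ⊆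
      Finset.univ.filter (fun w : Fin a → Bool => weight w % 2 = 1) := by
    intro w hw
    simp only [Finset.mem_filter, Finset.mem_univ, true_and] at hw ⊢
    omega
  have hSeq : S = (Finset.univ.filter (fun w : Fin a → Bool => weight w % 2 = 1)) \
      (Finset.univ.filter (fun w : Fin a → Bool => weight w = 1)) := by
    rw [hS]
    ext w
    simp only [Finset.mem_filter, Finset.mem_sdiff, Finset.mem_univ, true_and]
  have hScard : S.card = (Finset.univ.filter
      (fun w : Fin a → Bool => weight w % 2 = 1)).card - a := by
    rw [hSeq, Finset.card_sdiff_of_subset hsub, card_weight_one]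
  have hOcard := card_odd (a := a) ha0
  have hage : a ≤ (Finset.univ.filter
      (fun w : Fin a → Bool => weight w % 2 = 1)).card := by
    have := Finset.card_le_card hsub
    rw [card_weight_one] at this
    exact this
  rw [← hOcard]
  omega
end

section
/- Let d ≥ 2 and w = 2^d, and let the pairs P_i ⊆ {1, ..., w} for i ∈ {1, ..., w/2} be defined by P_i = {i, w/2 + 2i − 1} if 1 ≤ i ≤ w/4 and P_i = {i, 2i} if w/4 < i ≤ w/2. For 1 ≤ k ≤ d and 0 ≤ j < 2^k, let I_{k,j} = {j·2^{d−k} + 1, ..., (j+1)·2^{d−k}} and let T_{k,j} = { i ∈ {1, ..., w/2} : |P_i ∩ I_{k,j}| = 1 }. Then |T_{k,j}| = 2^{d−k} for every such k and j; in particular, for k = 1 every one of the w/2 checks is triggered, and for k ≤ d − 1 at least two checks are triggered. -/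
/-- The two-qubit parity-check pair `P_i ⊆ {1, …, w}`:
`P_i = {i, w/2 + 2i - 1}` if `1 ≤ i ≤ w/4`, and `P_i = {i, 2i}` if `w/4 < i ≤ w/2`. -/
def pairP (w i : ℕ) : Finset ℕ :=
  if i ≤ w / 4 then {i, w / 2 + 2 * i - 1} else {i, 2 * i}

/-- The interval of leaves `I_{k,j} = {j·2^(d-k) + 1, …, (j+1)·2^(d-k)}` affected by an
`X` fault at the `j`-th node of depth `k` in the binary tree. -/
def intervalI (d k j : ℕ) : Finset ℕ :=
  Finset.Icc (j * 2 ^ (d - k) + 1) ((j + 1) * 2 ^ (d - k))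

/-- `T_{k,j}`: the set of parity checks `i ∈ {1, …, w/2}` triggered by the fault at node
`(k, j)`, i.e. those whose pair `P_i` meets the interval `I_{k,j}` in exactly one element. -/
def triggered (w d k j : ℕ) : Finset ℕ :=
  (Finset.Icc 1 (w / 2)).filter (fun i => (pairP w i ∩ intervalI d k j).card = 1)

lemma pair_inter_left {a b : ℕ} {s : Finset ℕ} (ha : a ∈ s) (hb : b ∉ s) :
    ({a, b} : Finset ℕ) ∩ s = {a} := by
  ext x
  simp only [Finset.mem_inter, Finset.mem_insert, Finset.mem_singleton]
  constructor
  · rintro ⟨h | h, hx⟩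
    · exact h
    · exact absurd (h ▸ hx) hb
  · rintro rfl; exact ⟨Or.inl rfl, ha⟩

lemma pair_inter_right {a b : ℕ} {s : Finset ℕ} (ha : a ∉ s) (hb : b ∈ s) :
    ({a, b} : Finset ℕ) ∩ s = {b} := by
  ext x
  simp only [Finset.mem_inter, Finset.mem_insert, Finset.mem_singleton]
  constructor
  · rintro ⟨h | h, hx⟩
    · exact absurd (h ▸ hx) ha
    · exact h
  · rintro rfl; exact ⟨Or.inr rfl, hb⟩

lemma mem_of_pair_inter {a b : ℕ} {s : Finset ℕ}
    (h : (({a, b} : Finset ℕ) ∩ s).card = 1) : a ∈ s ∨ b ∈ s := by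
  by_contra hc
  push_neg at hc
  have he : ({a, b} : Finset ℕ) ∩ s = ∅ := by
    ext x
    simp only [Finset.mem_inter, Finset.mem_insert, Finset.mem_singleton,
      Finset.notMem_empty, iff_false, not_and]
    rintro (rfl | rfl)
    · exact hc.1
    · exact hc.2
  rw [he] at h
  simp at h

/-- For `d ≥ 2`, `w = 2^d`, `1 ≤ k ≤ d` and `j < 2^k`, exactly `2^(d-k)`
parity checks are triggered; in particular for `k = 1` all `w/2` checks are triggered, and
for `k ≤ d - 1` at least two checks are triggered. -/
theorem triggered_card (d : ℕ) (hd : 2 ≤ d) (w : ℕ) (hw : w = 2 ^ d)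
    (k j : ℕ) (hk1 : 1 ≤ k) (hk2 : k ≤ d) (hj : j < 2 ^ k) :
    (triggered w d k j).card = 2 ^ (d - k) ∧
    (k = 1 → triggered w d k j = Finset.Icc 1 (w / 2)) ∧
    (k ≤ d - 1 → 2 ≤ (triggered w d k j).card) := by
  have hwq : w = 4 * 2 ^ (d - 2) := by
    have h4 : (4 : ℕ) * 2 ^ (d - 2) = 2 ^ ((d - 2) + 2) := by rw [pow_add]; ring
    rw [hw, h4]; congr 1; omega
  have hhalf : (2 : ℕ) ^ (k - 1) * 2 ^ (d - k) = 2 * 2 ^ (d - 2) := by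
    rw [← pow_add, show (2 : ℕ) * 2 ^ (d - 2) = 2 ^ ((d - 2) + 1) by ring]
    congr 1; omega
  have hfull : (2 : ℕ) ^ k * 2 ^ (d - k) = 4 * 2 ^ (d - 2) := by
    rw [← pow_add, hwq.symm, hw]; congr 1; omega
  have hj1L : (j + 1) * 2 ^ (d - k) = j * 2 ^ (d - k) + 2 ^ (d - k) := by ring
  have hLpos : 1 ≤ 2 ^ (d - k) := Nat.one_le_two_pow
  have key : (triggered w d k j).card = 2 ^ (d - k) := by
    rcases lt_or_ge j (2 ^ (k - 1)) with hjlo | hjhi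
    · -- interval lies in [1, w/2]
      have hub : (j + 1) * 2 ^ (d - k) ≤ 2 * 2 ^ (d - 2) := by
        calc (j + 1) * 2 ^ (d - k) ≤ 2 ^ (k - 1) * 2 ^ (d - k) :=
              Nat.mul_le_mul_right _ (by omega)
          _ = 2 * 2 ^ (d - 2) := hhalf
      have hT : triggered w d k j = intervalI d k j := by
        refine Finset.ext fun i => ?_
        rw [triggered, Finset.mem_filter, intervalI]
        simp only [Finset.mem_Icc]
        constructor
        · rintro ⟨⟨hi1, hi2⟩, hcard⟩
          by_cases hb : i ≤ w / 4
          · rw [pairP, if_pos hb] at hcard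
            rcases mem_of_pair_inter hcard with h | h
            · simp only [intervalI, Finset.mem_Icc] at h; exact h
            · simp only [intervalI, Finset.mem_Icc] at h; omega
          · rw [pairP, if_neg hb] at hcard
            rcases mem_of_pair_inter hcard with h | h
            · simp only [intervalI, Finset.mem_Icc] at h; exact h
            · simp only [intervalI, Finset.mem_Icc] at h; omega
        · rintro ⟨h1, h2⟩
          refine ⟨⟨by omega, by omega⟩, ?_⟩
          by_cases hb : i ≤ w / 4
          · rw [pairP, if_pos hb, pair_inter_left ?_ ?_]
            · exact Finset.card_singleton _
            · simp only [intervalI, Finset.mem_Icc]; omega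
            · simp only [intervalI, Finset.mem_Icc]; omega
          · rw [pairP, if_neg hb, pair_inter_left ?_ ?_]
            · exact Finset.card_singleton _
            · simp only [intervalI, Finset.mem_Icc]; omega
            · simp only [intervalI, Finset.mem_Icc]; omega
      rw [hT, intervalI, Nat.card_Icc, hj1L]; omega
    · -- interval lies in (w/2, w]
      have hlb : 2 * 2 ^ (d - 2) ≤ j * 2 ^ (d - k) := by
        calc 2 * 2 ^ (d - 2) = 2 ^ (k - 1) * 2 ^ (d - k) := hhalf.symm
          _ ≤ j * 2 ^ (d - k) := Nat.mul_le_mul_right _ hjhi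
      have hub : (j + 1) * 2 ^ (d - k) ≤ 4 * 2 ^ (d - 2) := by
        calc (j + 1) * 2 ^ (d - k) ≤ 2 ^ k * 2 ^ (d - k) :=
              Nat.mul_le_mul_right _ (by omega)
          _ = 4 * 2 ^ (d - 2) := hfull
      have hI : (intervalI d k j).card = 2 ^ (d - k) := by
        rw [intervalI, Nat.card_Icc, hj1L]; omega
      rw [← hI]
      apply Finset.card_bij (fun i _ => if i ≤ w / 4 then w / 2 + 2 * i - 1 else 2 * i)
      · -- maps into the interval
        intro i hi
        simp only [triggered, Finset.mem_filter, Finset.mem_Icc] at hi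
        obtain ⟨⟨hi1, hi2⟩, hcard⟩ := hi
        by_cases hb : i ≤ w / 4
        · rw [pairP, if_pos hb] at hcard
          rcases mem_of_pair_inter hcard with h | h
          · simp only [intervalI, Finset.mem_Icc] at h; omega
          · rw [if_pos hb]; exact h
        · rw [pairP, if_neg hb] at hcard
          rcases mem_of_pair_inter hcard with h | h
          · simp only [intervalI, Finset.mem_Icc] at h; omega
          · rw [if_neg hb]; exact h
      · -- injective
        intro i1 hi1 i2 hi2 heq
        simp only [triggered, Finset.mem_filter, Finset.mem_Icc] at hi1 hi2
        by_cases hb1 : i1 ≤ w / 4 <;> by_cases hb2 : i2 ≤ w / 4 <;>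
          simp only [if_pos, if_neg, hb1, hb2, if_true, if_false] at heq <;> omega
      · -- surjective
        intro m hm
        simp only [intervalI, Finset.mem_Icc] at hm
        by_cases hpar : m % 2 = 1
        · refine ⟨(m + 1 - w / 2) / 2, ?_, ?_⟩
          · simp only [triggered, Finset.mem_filter, Finset.mem_Icc]
            refine ⟨⟨by omega, by omega⟩, ?_⟩
            rw [pairP, if_pos (by omega), pair_inter_right ?_ ?_]
            · exact Finset.card_singleton _
            · simp only [intervalI, Finset.mem_Icc]; omega
            · simp only [intervalI, Finset.mem_Icc]; omega
          · rw [if_pos (by omega)]; omega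
        · refine ⟨m / 2, ?_, ?_⟩
          · simp only [triggered, Finset.mem_filter, Finset.mem_Icc]
            refine ⟨⟨by omega, by omega⟩, ?_⟩
            rw [pairP, if_neg (by omega), pair_inter_right ?_ ?_]
            · exact Finset.card_singleton _
            · simp only [intervalI, Finset.mem_Icc]; omega
            · simp only [intervalI, Finset.mem_Icc]; omega
          · rw [if_neg (by omega)]; omega
  refine ⟨key, ?_, ?_⟩
  · intro hk
    apply Finset.eq_of_subset_of_card_le
      (show triggered w d k j ⊆ Finset.Icc 1 (w / 2) from Finset.filter_subset _ _)
    rw [key, Nat.card_Icc]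
    subst hk
    have : (2 : ℕ) ^ (d - 1) = 2 * 2 ^ (d - 2) := by
      rw [show d - 1 = (d - 2) + 1 by omega]; ring
    omega
  · intro hkd
    rw [key]
    calc (2 : ℕ) = 2 ^ 1 := rfl
      _ ≤ 2 ^ (d - k) := Nat.pow_le_pow_right (by norm_num) (by omega)
end

section
/- Let d ≥ 3 and w = 2^d, with pairs P_i ⊆ {1, ..., w} for i ∈ {1, ..., w/2} defined by P_i = {i, w/2 + 2i − 1} if 1 ≤ i ≤ w/4 and P_i = {i, 2i} if w/4 < i ≤ w/2, intervals I_{k,j} = {j·2^{d−k} + 1, ..., (j+1)·2^{d−k}}, and triggered sets T_{k,j} = { i ∈ {1, ..., w/2} : |P_i ∩ I_{k,j}| = 1 }. Then the map (k, j) ↦ T_{k,j} is injective on the domain {(k, j) : 2 ≤ k ≤ d − 1, 0 ≤ j < 2^k}: distinct tree nodes at depths between 2 and d − 1 trigger distinct sets of parity checks. -/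
lemma card_pair_inter_left {x y : ℕ} {S : Finset ℕ} (hy : y ∉ S) :
    (({x, y} : Finset ℕ) ∩ S).card = 1 ↔ x ∈ S := by
  by_cases hx : x ∈ S
  · have h : ({x, y} : Finset ℕ) ∩ S = {x} := by
      ext z
      simp only [Finset.mem_inter, Finset.mem_insert, Finset.mem_singleton]
      constructor
      · rintro ⟨rfl | rfl, hz⟩
        · rfl
        · exact absurd hz hy
      · rintro rfl; exact ⟨Or.inl rfl, hx⟩
    simp [h, hx]
  · have h : ({x, y} : Finset ℕ) ∩ S = ∅ := by
      ext z
      simp only [Finset.mem_inter, Finset.mem_insert, Finset.mem_singleton,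
        Finset.notMem_empty, iff_false, not_and]
      rintro (rfl | rfl) hz
      · exact hx hz
      · exact hy hz
    simp [h, hx]

lemma card_pair_inter_right {x y : ℕ} {S : Finset ℕ} (hx : x ∉ S) :
    (({x, y} : Finset ℕ) ∩ S).card = 1 ↔ y ∈ S := by
  rw [Finset.pair_comm]; exact card_pair_inter_left hx

lemma mem_triggered (w d k j i : ℕ) :
    i ∈ triggered w d k j ↔ (1 ≤ i ∧ i ≤ w / 2) ∧
      ((if i ≤ w / 4 then ({i, w / 2 + 2 * i - 1} : Finset ℕ) else {i, 2 * i}) ∩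
        Finset.Icc (j * 2 ^ (d - k) + 1) ((j + 1) * 2 ^ (d - k))).card = 1 := by
  rw [triggered, Finset.mem_filter, Finset.mem_Icc]; rfl

lemma pow_div_two (d : ℕ) (hd : 3 ≤ d) : 2 ^ d / 2 = 2 ^ (d - 1) := by
  have := Nat.pow_div (show 1 ≤ d by omega) (show 0 < 2 by norm_num)
  simpa using this

lemma pow_div_four (d : ℕ) (hd : 3 ≤ d) : 2 ^ d / 4 = 2 ^ (d - 2) := by
  have := Nat.pow_div (show 2 ≤ d by omega) (show 0 < 2 by norm_num)
  simpa using this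

/-- Case A: the interval `I_{k,j}` lies in the first half of the leaves; then the
triggered set is the interval itself. -/
lemma trigA (d k j : ℕ) (hd : 3 ≤ d) (hk1 : 2 ≤ k) (hk2 : k ≤ d - 1)
    (hA : (j + 1) * 2 ^ (d - k) ≤ 2 ^ (d - 1)) :
    triggered (2 ^ d) d k j = Finset.Icc (j * 2 ^ (d - k) + 1) ((j + 1) * 2 ^ (d - k)) := by
  have hd2 := pow_div_two d hd
  have hd4 := pow_div_four d hd
  have hE : (2 : ℕ) ^ (d - 1) = 2 * 2 ^ (d - 2) := by
    rw [← pow_succ']; congr 1; omega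
  have hsplit : (j + 1) * 2 ^ (d - k) = j * 2 ^ (d - k) + 2 ^ (d - k) := by ring
  have hL1 : 1 ≤ (2 : ℕ) ^ (d - k) := Nat.one_le_two_pow
  ext i
  rw [mem_triggered, hd2, hd4, Finset.mem_Icc]
  rw [hsplit] at hA ⊢
  set e := (2 : ℕ) ^ (d - 2) with he
  set a := j * 2 ^ (d - k) with ha
  set L := (2 : ℕ) ^ (d - k) with hLdef
  by_cases hi : i ≤ e
  · rw [if_pos hi]
    rcases Nat.eq_zero_or_pos i with rfl | hi1
    · apply iff_of_false
      · rintro ⟨⟨h1, _⟩, _⟩; omega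
      · rintro ⟨h1, _⟩; omega
    · rw [card_pair_inter_left (show 2 ^ (d - 1) + 2 * i - 1 ∉ Finset.Icc (a + 1) (a + L) by
        simp only [Finset.mem_Icc, not_and, not_le]; omega)]
      simp only [Finset.mem_Icc]; omega
  · rw [if_neg hi]
    rw [card_pair_inter_left (show 2 * i ∉ Finset.Icc (a + 1) (a + L) by
        simp only [Finset.mem_Icc, not_and, not_le]; omega)]
    simp only [Finset.mem_Icc]; omega

/-- Case B: the interval `I_{k,j}` lies in the second half of the leaves; then the
triggered set is a union of two shorter intervals. -/
lemma trigB (d k t : ℕ) (hd : 3 ≤ d) (hk1 : 2 ≤ k) (hk2 : k ≤ d - 1)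
    (ht : t < 2 ^ (k - 1)) :
    triggered (2 ^ d) d k (2 ^ (k - 1) + t) =
      Finset.Icc (t * 2 ^ (d - k - 1) + 1) (t * 2 ^ (d - k - 1) + 2 ^ (d - k - 1)) ∪
      Finset.Icc (2 ^ (d - 2) + t * 2 ^ (d - k - 1) + 1)
        (2 ^ (d - 2) + t * 2 ^ (d - k - 1) + 2 ^ (d - k - 1)) := by
  have hd2 := pow_div_two d hd
  have hd4 := pow_div_four d hd
  have hE : (2 : ℕ) ^ (d - 1) = 2 * 2 ^ (d - 2) := by
    rw [← pow_succ']; congr 1; omega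
  have hL : (2 : ℕ) ^ (d - k) = 2 * 2 ^ (d - k - 1) := by
    rw [← pow_succ']; congr 1; omega
  have hke : (2 : ℕ) ^ (k - 1) * 2 ^ (d - k - 1) = 2 ^ (d - 2) := by
    rw [← pow_add]; congr 1; omega
  have hkL : (2 : ℕ) ^ (k - 1) * 2 ^ (d - k) = 2 ^ (d - 1) := by
    rw [← pow_add]; congr 1; omega
  have hbound : t * 2 ^ (d - k - 1) + 2 ^ (d - k - 1) ≤ 2 ^ (d - 2) := by
    have h1 : (t + 1) * 2 ^ (d - k - 1) ≤ 2 ^ (k - 1) * 2 ^ (d - k - 1) :=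
      Nat.mul_le_mul_right _ (by omega)
    have h2 : (t + 1) * 2 ^ (d - k - 1) = t * 2 ^ (d - k - 1) + 2 ^ (d - k - 1) := by ring
    omega
  have hmin : (2 ^ (k - 1) + t) * 2 ^ (d - k) =
      2 * 2 ^ (d - 2) + 2 * (t * 2 ^ (d - k - 1)) := by
    rw [add_mul, hkL, hE, hL]; ring
  have hmax : (2 ^ (k - 1) + t + 1) * 2 ^ (d - k) =
      2 * 2 ^ (d - 2) + 2 * (t * 2 ^ (d - k - 1)) + 2 * 2 ^ (d - k - 1) := by
    rw [add_mul, hmin, hL]; ring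
  have hh1 : 1 ≤ (2 : ℕ) ^ (d - k - 1) := Nat.one_le_two_pow
  ext i
  rw [mem_triggered, hd2, hd4, Finset.mem_union, Finset.mem_Icc, Finset.mem_Icc, hmin, hmax, hE]
  set e := (2 : ℕ) ^ (d - 2) with he
  set h := (2 : ℕ) ^ (d - k - 1) with hhdef
  set b := t * h with hb
  by_cases hi : i ≤ e
  · rw [if_pos hi]
    rcases Nat.eq_zero_or_pos i with rfl | hi1
    · apply iff_of_false
      · rintro ⟨⟨h1, _⟩, _⟩; omega
      · rintro (⟨h1, _⟩ | ⟨h1, _⟩) <;> omega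
    · rw [card_pair_inter_right (show i ∉ Finset.Icc (2 * e + 2 * b + 1) (2 * e + 2 * b + 2 * h) by
        simp only [Finset.mem_Icc, not_and, not_le]; omega)]
      simp only [Finset.mem_Icc]; omega
  · rw [if_neg hi]
    by_cases hi2 : i ≤ 2 * e
    · rw [card_pair_inter_right (show i ∉ Finset.Icc (2 * e + 2 * b + 1) (2 * e + 2 * b + 2 * h) by
        simp only [Finset.mem_Icc, not_and, not_le]; omega)]
      simp only [Finset.mem_Icc]; omega
    · apply iff_of_false
      · rintro ⟨⟨_, h2⟩, _⟩; omega
      · rintro (⟨_, h2⟩ | ⟨_, h2⟩) <;> omega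

/-- A single interval can never coincide with the union of two short intervals
separated by a genuine gap. -/
lemma interval_ne_union (a b c h e : ℕ) (h1 : 1 ≤ h) (h2 : h < e)
    (heq : Finset.Icc a b =
      Finset.Icc (c + 1) (c + h) ∪ Finset.Icc (e + c + 1) (e + c + h)) : False := by
  have hiff := Finset.ext_iff.mp heq
  have m1 := (hiff (c + h)).mpr (by simp only [Finset.mem_union, Finset.mem_Icc]; omega)
  have m2 := (hiff (e + c + 1)).mpr (by simp only [Finset.mem_union, Finset.mem_Icc]; omega)
  have m3 := (hiff (c + h + 1)).mp (by
    simp only [Finset.mem_Icc] at m1 m2 ⊢; omega)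
  simp only [Finset.mem_union, Finset.mem_Icc] at m3
  omega

lemma pow_le_pow_sub (d k : ℕ) (hk : 2 ≤ k) (hk2 : k ≤ d - 1) (hd : 3 ≤ d) :
    (2 : ℕ) ^ (d - k - 1) < 2 ^ (d - 2) :=
  Nat.pow_lt_pow_right (by norm_num) (by omega)

/-- For `d ≥ 3` and `w = 2^d`, distinct tree nodes `(k, j)` at depths
`2 ≤ k ≤ d - 1` trigger distinct sets of parity checks: the map `(k, j) ↦ T_{k,j}` is
injective on `{(k, j) : 2 ≤ k ≤ d - 1, j < 2^k}`. -/
theorem triggered_injective (d : ℕ) (hd : 3 ≤ d) (w : ℕ) (hw : w = 2 ^ d)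
    (k j k' j' : ℕ)
    (hk1 : 2 ≤ k) (hk2 : k ≤ d - 1) (hj : j < 2 ^ k)
    (hk1' : 2 ≤ k') (hk2' : k' ≤ d - 1) (hj' : j' < 2 ^ k')
    (heq : triggered w d k j = triggered w d k' j') :
    k = k' ∧ j = j' := by
  subst hw
  have hkk : 2 ^ k = 2 * 2 ^ (k - 1) := by rw [← pow_succ']; congr 1; omega
  have hkk' : 2 ^ k' = 2 * 2 ^ (k' - 1) := by rw [← pow_succ']; congr 1; omega
  have hkL : (2 : ℕ) ^ (k - 1) * 2 ^ (d - k) = 2 ^ (d - 1) := by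
    rw [← pow_add]; congr 1; omega
  have hkL' : (2 : ℕ) ^ (k' - 1) * 2 ^ (d - k') = 2 ^ (d - 1) := by
    rw [← pow_add]; congr 1; omega
  have hpowinj : ∀ m n : ℕ, (2 : ℕ) ^ m = 2 ^ n → m = n := fun m n h =>
    Nat.pow_right_injective (le_refl 2) h
  have hL1 : 1 ≤ (2 : ℕ) ^ (d - k) := Nat.one_le_two_pow
  have hL1' : 1 ≤ (2 : ℕ) ^ (d - k') := Nat.one_le_two_pow
  have hh1 : 1 ≤ (2 : ℕ) ^ (d - k - 1) := Nat.one_le_two_pow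
  have hh1' : 1 ≤ (2 : ℕ) ^ (d - k' - 1) := Nat.one_le_two_pow
  have hhe : (2 : ℕ) ^ (d - k - 1) < 2 ^ (d - 2) := pow_le_pow_sub d k hk1 hk2 hd
  have hhe' : (2 : ℕ) ^ (d - k' - 1) < 2 ^ (d - 2) := pow_le_pow_sub d k' hk1' hk2' hd
  by_cases hc : j + 1 ≤ 2 ^ (k - 1)
  · have hA : (j + 1) * 2 ^ (d - k) ≤ 2 ^ (d - 1) := by
      calc (j + 1) * 2 ^ (d - k) ≤ 2 ^ (k - 1) * 2 ^ (d - k) := Nat.mul_le_mul_right _ hc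
        _ = 2 ^ (d - 1) := hkL
    rw [trigA d k j hd hk1 hk2 hA] at heq
    by_cases hc' : j' + 1 ≤ 2 ^ (k' - 1)
    · -- both intervals in the first half
      have hA' : (j' + 1) * 2 ^ (d - k') ≤ 2 ^ (d - 1) := by
        calc (j' + 1) * 2 ^ (d - k') ≤ 2 ^ (k' - 1) * 2 ^ (d - k') := Nat.mul_le_mul_right _ hc'
          _ = 2 ^ (d - 1) := hkL'
      rw [trigA d k' j' hd hk1' hk2' hA'] at heq
      have hs : (j + 1) * 2 ^ (d - k) = j * 2 ^ (d - k) + 2 ^ (d - k) := by ring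
      have hs' : (j' + 1) * 2 ^ (d - k') = j' * 2 ^ (d - k') + 2 ^ (d - k') := by ring
      rw [hs, hs'] at heq
      have hiff := Finset.ext_iff.mp heq
      have m1 := (hiff (j * 2 ^ (d - k) + 1)).mp (by simp only [Finset.mem_Icc]; omega)
      have m2 := (hiff (j * 2 ^ (d - k) + 2 ^ (d - k))).mp (by simp only [Finset.mem_Icc]; omega)
      have m3 := (hiff (j' * 2 ^ (d - k') + 1)).mpr (by simp only [Finset.mem_Icc]; omega)
      have m4 := (hiff (j' * 2 ^ (d - k') + 2 ^ (d - k'))).mpr (by simp only [Finset.mem_Icc]; omega)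
      simp only [Finset.mem_Icc] at m1 m2 m3 m4
      have hLeq : (2 : ℕ) ^ (d - k) = 2 ^ (d - k') := by omega
      have hkeq : k = k' := by have := hpowinj _ _ hLeq; omega
      subst hkeq
      refine ⟨rfl, ?_⟩
      have : j * 2 ^ (d - k) = j' * 2 ^ (d - k) := by omega
      exact Nat.eq_of_mul_eq_mul_right (by omega) this
    · -- first half versus second half: impossible
      obtain ⟨t', rfl⟩ : ∃ t', j' = 2 ^ (k' - 1) + t' := ⟨j' - 2 ^ (k' - 1), by omega⟩
      have ht' : t' < 2 ^ (k' - 1) := by omega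
      rw [trigB d k' t' hd hk1' hk2' ht'] at heq
      exact absurd heq (fun hq => interval_ne_union _ _ _ _ _ hh1' hhe' hq)
  · obtain ⟨t, rfl⟩ : ∃ t, j = 2 ^ (k - 1) + t := ⟨j - 2 ^ (k - 1), by omega⟩
    have ht : t < 2 ^ (k - 1) := by omega
    rw [trigB d k t hd hk1 hk2 ht] at heq
    by_cases hc' : j' + 1 ≤ 2 ^ (k' - 1)
    · -- second half versus first half: impossible
      have hA' : (j' + 1) * 2 ^ (d - k') ≤ 2 ^ (d - 1) := by
        calc (j' + 1) * 2 ^ (d - k') ≤ 2 ^ (k' - 1) * 2 ^ (d - k') := Nat.mul_le_mul_right _ hc'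
          _ = 2 ^ (d - 1) := hkL'
      rw [trigA d k' j' hd hk1' hk2' hA'] at heq
      exact absurd heq.symm (fun hq => interval_ne_union _ _ _ _ _ hh1 hhe hq)
    · -- both intervals in the second half
      obtain ⟨t', rfl⟩ : ∃ t', j' = 2 ^ (k' - 1) + t' := ⟨j' - 2 ^ (k' - 1), by omega⟩
      have ht' : t' < 2 ^ (k' - 1) := by omega
      rw [trigB d k' t' hd hk1' hk2' ht'] at heq
      have hbound : t * 2 ^ (d - k - 1) + 2 ^ (d - k - 1) ≤ 2 ^ (d - 2) := by
        have h1 : (t + 1) * 2 ^ (d - k - 1) ≤ 2 ^ (k - 1) * 2 ^ (d - k - 1) :=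
          Nat.mul_le_mul_right _ (by omega)
        have h2 : (t + 1) * 2 ^ (d - k - 1) = t * 2 ^ (d - k - 1) + 2 ^ (d - k - 1) := by ring
        have h3 : (2 : ℕ) ^ (k - 1) * 2 ^ (d - k - 1) = 2 ^ (d - 2) := by
          rw [← pow_add]; congr 1; omega
        omega
      have hbound' : t' * 2 ^ (d - k' - 1) + 2 ^ (d - k' - 1) ≤ 2 ^ (d - 2) := by
        have h1 : (t' + 1) * 2 ^ (d - k' - 1) ≤ 2 ^ (k' - 1) * 2 ^ (d - k' - 1) :=
          Nat.mul_le_mul_right _ (by omega)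
        have h2 : (t' + 1) * 2 ^ (d - k' - 1) = t' * 2 ^ (d - k' - 1) + 2 ^ (d - k' - 1) := by ring
        have h3 : (2 : ℕ) ^ (k' - 1) * 2 ^ (d - k' - 1) = 2 ^ (d - 2) := by
          rw [← pow_add]; congr 1; omega
        omega
      have hiff := Finset.ext_iff.mp heq
      have m1 := (hiff (t * 2 ^ (d - k - 1) + 1)).mp
        (by simp only [Finset.mem_union, Finset.mem_Icc]; omega)
      have m2 := (hiff (t * 2 ^ (d - k - 1) + 2 ^ (d - k - 1))).mp
        (by simp only [Finset.mem_union, Finset.mem_Icc]; omega)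
      have m3 := (hiff (t' * 2 ^ (d - k' - 1) + 1)).mpr
        (by simp only [Finset.mem_union, Finset.mem_Icc]; omega)
      have m4 := (hiff (t' * 2 ^ (d - k' - 1) + 2 ^ (d - k' - 1))).mpr
        (by simp only [Finset.mem_union, Finset.mem_Icc]; omega)
      simp only [Finset.mem_union, Finset.mem_Icc] at m1 m2 m3 m4
      have hb : t * 2 ^ (d - k - 1) = t' * 2 ^ (d - k' - 1) ∧
          (2 : ℕ) ^ (d - k - 1) = 2 ^ (d - k' - 1) := by omega
      have hkeq : k = k' := by have := hpowinj _ _ hb.2; omega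
      subst hkeq
      refine ⟨rfl, ?_⟩
      have : t = t' := Nat.eq_of_mul_eq_mul_right (by omega) hb.1
      omega
end
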